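/- Let k be a field of characteristic ≠ 2 equipped with a non-empty set V of non-trivial discrete valuations. If there are integers r, s ≥ 1 such that all quadratic forms over k satisfy LGP(r, s) with respect to V, then for any integer j (not necessarily positive) such that r + j ≥ 1 and s + j ≥ 1, all quadratic forms over k satisfy LGP(r + j, s + j) with respect to V. -/

import Mathlib

/-!  Diagonal quadratic forms over a field of characteristic ≠ 2.
In characteristic ≠ 2 every regular quadratic form is isometric to a diagonal form
`⟨d 1, …, d n⟩`, so we model (regular) quadratic forms by their diagonal
coefficient functions. -/

/-- The diagonal quadratic form `⟨d i⟩_{i : ι}` over `k`. -/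
noncomputable def diagQF (k : Type) [Field k] {ι : Type} [Fintype ι] (d : ι → k) :
    QuadraticForm k (ι → k) :=
  QuadraticMap.weightedSumSquares k d

/-- Isometry of (diagonal) quadratic forms. -/
def FormIsom (k : Type) [Field k] {ι κ : Type} [Fintype ι] [Fintype κ]
    (d : ι → k) (e : κ → k) : Prop :=
  QuadraticMap.Equivalent (diagQF k d) (diagQF k e)

/-- The orthogonal sum of `m` copies of the hyperbolic plane `⟨1, -1⟩`. -/
def hypForm (k : Type) [Field k] (m : ℕ) : Fin (2 * m) → k :=
  fun j => if j.val % 2 = 0 then 1 else -1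

/-- The Witt index of a (diagonal) form: the largest `m` such that the form is isometric
to `m·ℍ ⟂ (rest)` for some diagonal form `rest`. -/
noncomputable def wittIndex (k : Type) [Field k] {ι : Type} [Fintype ι] (d : ι → k) : ℕ :=
  sSup {m : ℕ | ∃ (s : ℕ) (e : Fin s → k), FormIsom k d (Sum.elim (hypForm k m) e)}
/-- The value group of (normalized) discrete valuations. -/
abbrev Zm0 : Type := WithZero (Multiplicative ℤ)

/-- A (discrete, i.e. `ℤₘ₀`-valued) valuation is non-trivial if it takes a value other
than 0 and 1. -/
def isNontrivialVal {k : Type} [Field k] (v : Valuation k Zm0) : Prop :=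
  ∃ x : k, v x ≠ 0 ∧ v x ≠ 1

/-- The completion `k_v` of a field `k` with respect to a discrete valuation `v`. -/
noncomputable def valCompletion {k : Type} [Field k] (v : Valuation k Zm0) : Type :=
  letI := Valued.mk' v
  UniformSpace.Completion k

noncomputable instance valCompletion.instField {k : Type} [Field k] (v : Valuation k Zm0) :
    Field (valCompletion v) :=
  letI := Valued.mk' v
  UniformSpace.Completion.instField

/-- The canonical embedding of a field into its `v`-adic completion. -/
noncomputable def toValCompletion {k : Type} [Field k] (v : Valuation k Zm0) :
    k →+* valCompletion v :=
  letI := Valued.mk' v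
  UniformSpace.Completion.coeRingHom

/-- A quadratic form `q` over `k` satisfies `LGP(r, s)` with respect to a set `V` of
discrete valuations on `k` if `i_W(q_{k_v}) ≥ r` for all `v ∈ V` implies `i_W(q) ≥ s`. -/
def satisfiesLGP {k : Type} [Field k] (V : Set (Valuation k Zm0)) {ι : Type} [Fintype ι]
    (d : ι → k) (r s : ℕ) : Prop :=
  (∀ v ∈ V, r ≤ wittIndex (valCompletion v) (toValCompletion v ∘ d)) → s ≤ wittIndex k d

/-! ### Auxiliary lemmas -/

open QuadraticMap

section Reflection

variable {K : Type} [Field K] {M : Type} [AddCommGroup M] [Module K M]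

lemma QF.map_add' (Q : QuadraticForm K M) (u v : M) :
    Q (u + v) = Q u + Q v + polar Q u v := by
  unfold QuadraticMap.polar; ring

noncomputable def QF.tau (Q : QuadraticForm K M) (w : M) : M →ₗ[K] M :=
  LinearMap.id - (((Q w)⁻¹ • (polarBilin Q w)).smulRight w)

lemma QF.tau_apply (Q : QuadraticForm K M) (w x : M) :
    QF.tau Q w x = x - ((Q w)⁻¹ * polar Q w x) • w := by
  simp [QF.tau, LinearMap.sub_apply, LinearMap.smulRight_apply, LinearMap.smul_apply,
    smul_smul, polarBilin]

lemma QF.tau_iso (Q : QuadraticForm K M) (w : M) (hw : Q w ≠ 0) (x : M) :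
    Q (QF.tau Q w x) = Q x := by
  rw [QF.tau_apply, sub_eq_add_neg, QF.map_add' Q, ← neg_smul, QuadraticMap.map_smul,
    polar_smul_right, polar_comm]
  field_simp
  linear_combination (polar (⇑Q) x w ^ 2 * (Q w)⁻¹) * (mul_inv_cancel₀ hw)

lemma QF.tau_invol (Q : QuadraticForm K M) (w : M) (hw : Q w ≠ 0) :
    Function.Involutive (QF.tau Q w) := by
  intro x
  rw [QF.tau_apply, QF.tau_apply]
  rw [polar_sub_right, polar_smul_right, polar_self]
  have h2 : (2 : ℕ) • Q w = 2 * Q w := by simp [nsmul_eq_mul]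
  rw [h2]
  have : (Q w)⁻¹ * (polar Q w x - ((Q w)⁻¹ * polar Q w x) • (2 * Q w)) =
      -((Q w)⁻¹ * polar Q w x) := by
    simp only [smul_eq_mul]
    field_simp
    ring
  rw [this, neg_smul, sub_neg_eq_add, sub_add_cancel]

/-- Reflection in a vector of nonzero value. -/
noncomputable def QF.refl0 (Q : QuadraticForm K M) (w : M) (hw : Q w ≠ 0) :
    Q.IsometryEquiv Q :=
  { LinearEquiv.ofInvolutive (QF.tau Q w) (QF.tau_invol Q w hw) with
    map_app' := fun x => QF.tau_iso Q w hw x }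

lemma QF.refl0_apply (Q : QuadraticForm K M) (w : M) (hw : Q w ≠ 0) (x : M) :
    QF.refl0 Q w hw x = x - ((Q w)⁻¹ * polar Q w x) • w := by
  rw [← QF.tau_apply]; rfl

lemma QF.two_nsmul_eq (a : K) : (2:ℕ) • a = 2 * a := by simp [nsmul_eq_mul]

/-- Moving a vector to another vector of the same nonzero value by an isometry. -/
lemma QF.exists_isom_map (h2 : (2:K) ≠ 0) (Q : QuadraticForm K M) (u v : M)
    (huv : Q u = Q v) (hv : Q v ≠ 0) : ∃ σ : Q.IsometryEquiv Q, σ u = v := by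
  have hsum : Q (u - v) + Q (u + v) = 4 * Q v := by
    rw [sub_eq_add_neg, QF.map_add', QF.map_add', QuadraticMap.map_neg, polar_neg_right, huv]
    ring
  have h4 : (4 : K) * Q v ≠ 0 := by
    have h42 : (4:K) = 2 * 2 := by norm_num
    exact mul_ne_zero (h42 ▸ mul_ne_zero h2 h2) hv
  by_cases hm : Q (u - v) ≠ 0
  · refine ⟨QF.refl0 Q (u - v) hm, ?_⟩
    rw [QF.refl0_apply]
    have l1 : polar Q (u - v) u = 2 * Q v - polar (⇑Q) u v := by
      rw [polar_sub_left, polar_self, polar_comm _ v u, huv, QF.two_nsmul_eq]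
    have l2 : Q (u - v) = 2 * Q v - polar (⇑Q) u v := by
      rw [sub_eq_add_neg, QF.map_add', QuadraticMap.map_neg, polar_neg_right, huv]; ring
    rw [l1, ← l2, inv_mul_cancel₀ hm, one_smul, sub_sub_cancel]
  · push_neg at hm
    have hp0 : Q (u + v) ≠ 0 := by
      intro h; rw [hm, h, zero_add] at hsum; exact h4 hsum.symm
    have h1 : QF.refl0 Q (u + v) hp0 u = -v := by
      rw [QF.refl0_apply]
      have l1 : polar Q (u + v) u = 2 * Q v + polar (⇑Q) u v := by
        rw [polar_add_left, polar_self, polar_comm _ v u, huv, QF.two_nsmul_eq]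
      have l2 : Q (u + v) = 2 * Q v + polar (⇑Q) u v := by
        rw [QF.map_add', huv]; ring
      rw [l1, ← l2, inv_mul_cancel₀ hp0, one_smul]
      abel
    have h2' : QF.refl0 Q v hv (-v) = v := by
      rw [QF.refl0_apply]
      have hp : polar Q v (-v) = -(2 * Q v) := by
        rw [polar_neg_right, polar_self, QF.two_nsmul_eq]
      rw [hp]
      have hc : (Q v)⁻¹ * -(2 * Q v) = -2 := by field_simp
      rw [hc, neg_smul, sub_neg_eq_add, two_smul]
      abel
    refine ⟨(QF.refl0 Q (u + v) hp0).trans (QF.refl0 Q v hv), ?_⟩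
    show QF.refl0 Q v hv (QF.refl0 Q (u + v) hp0 u) = v
    rw [h1, h2']

end Reflection

section Cancel

variable {K : Type} [Field K] {M₁ M₂ : Type} [AddCommGroup M₁] [Module K M₁]
  [AddCommGroup M₂] [Module K M₂]

lemma QF.isom_polar {Q₁ : QuadraticForm K M₁} {Q₂ : QuadraticForm K M₂}
    (f : Q₁.IsometryEquiv Q₂) (x y : M₁) :
    polar Q₂ (f x) (f y) = polar Q₁ x y := by
  unfold QuadraticMap.polar
  rw [← map_add f, f.map_app, f.map_app, f.map_app]

lemma QF.one_dim_val (q : QuadraticForm K K) (x : K) : q x = x * x * q 1 := by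
  have : q x = q (x • 1) := by rw [smul_eq_mul, mul_one]
  rw [this, QuadraticMap.map_smul, smul_eq_mul]

/-- First components vanish for an isometry fixing `(1,0)`. -/
lemma QF.fst_eq_zero (h2 : (2:K) ≠ 0) {q : QuadraticForm K K} (hq : q 1 ≠ 0)
    {Q₁ : QuadraticForm K M₁} {Q₂ : QuadraticForm K M₂}
    (ψ : (q.prod Q₁).IsometryEquiv (q.prod Q₂)) (hψ : ψ (1, 0) = (1, 0)) (m : M₁) :
    (ψ (0, m)).1 = 0 := by
  have hp := QF.isom_polar ψ (0, m) (1, 0)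
  rw [hψ] at hp
  have hR : polar (q.prod Q₁) (0, m) (1, 0) = 0 := by
    unfold QuadraticMap.polar
    simp [QuadraticMap.prod_apply]
  have hL : polar (q.prod Q₂) (ψ (0, m)) (1, 0) =
      2 * (ψ (0, m)).1 * q 1 := by
    unfold QuadraticMap.polar
    have : (ψ (0, m) + (1, 0)) = ((ψ (0, m)).1 + 1, (ψ (0, m)).2 + 0) := rfl
    rw [this]
    simp only [QuadraticMap.prod_apply, add_zero, QuadraticMap.map_zero]
    rw [QF.one_dim_val q ((ψ (0,m)).1 + 1), QF.one_dim_val q (ψ (0,m)).1,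
      QF.one_dim_val q 1]
    ring
  rw [hL, hR] at hp
  rcases mul_eq_zero.mp hp with h | h
  · rcases mul_eq_zero.mp h with h' | h'
    · exact absurd h' h2
    · exact h'
  · exact absurd h hq

/-- Witt cancellation of a regular one-dimensional subform. -/
lemma QF.cancel_aux (h2 : (2:K) ≠ 0) (q : QuadraticForm K K) (hq : q 1 ≠ 0)
    (Q₁ : QuadraticForm K M₁) (Q₂ : QuadraticForm K M₂)
    (h : (q.prod Q₁).Equivalent (q.prod Q₂)) : Q₁.Equivalent Q₂ := by
  obtain ⟨f⟩ := h
  have hval : (q.prod Q₂) (f (1, 0)) = (q.prod Q₂) (1, 0) := by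
    rw [f.map_app]
    simp [QuadraticMap.prod_apply]
  have hne : (q.prod Q₂) ((1 : K), (0 : M₂)) ≠ 0 := by
    simpa [QuadraticMap.prod_apply] using hq
  obtain ⟨σ, hσ⟩ := QF.exists_isom_map h2 (q.prod Q₂) (f (1,0)) (1,0) hval hne
  set χ := f.trans σ with hχdef
  have hχ : χ (1, 0) = (1, 0) := by
    show σ (f (1, 0)) = (1, 0)
    exact hσ
  have hχs : χ.symm (1, 0) = (1, 0) := by
    rw [← hχ]
    exact χ.toLinearEquiv.symm_apply_apply _
  have hz1 : ∀ m, (χ (0, m)).1 = 0 := QF.fst_eq_zero h2 hq χ hχ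
  have hz2 : ∀ n, (χ.symm (0, n)).1 = 0 := QF.fst_eq_zero h2 hq χ.symm hχs
  set g : M₁ →ₗ[K] M₂ :=
    (LinearMap.snd K K M₂) ∘ₗ (χ.toLinearEquiv : (K × M₁) →ₗ[K] (K × M₂)) ∘ₗ
      (LinearMap.inr K K M₁) with hg
  set g' : M₂ →ₗ[K] M₁ :=
    (LinearMap.snd K K M₁) ∘ₗ (χ.toLinearEquiv.symm : (K × M₂) →ₗ[K] (K × M₁)) ∘ₗ
      (LinearMap.inr K K M₂) with hg'
  have hgapp : ∀ m, χ (0, m) = (0, g m) := fun m => Prod.ext (hz1 m) rfl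
  have hg'app : ∀ n, χ.symm (0, n) = (0, g' n) := fun n => Prod.ext (hz2 n) rfl
  have hgg' : ∀ n, g (g' n) = n := by
    intro n
    have h1 : χ (0, g' n) = (0, n) := by
      rw [← hg'app n]
      exact χ.toLinearEquiv.apply_symm_apply _
    have h2' := hgapp (g' n)
    rw [h1] at h2'
    exact congrArg Prod.snd h2'.symm
  have hg'g : ∀ m, g' (g m) = m := by
    intro m
    have h1 : χ.symm (0, g m) = (0, m) := by
      rw [← hgapp m]
      exact χ.toLinearEquiv.symm_apply_apply _
    have h2' := hg'app (g m)
    rw [h1] at h2'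
    exact congrArg Prod.snd h2'.symm
  refine ⟨{ LinearEquiv.ofLinear (re₁₂ := RingHomInvPair.ids) (re₂₁ := RingHomInvPair.ids) g g' (LinearMap.ext hgg') (LinearMap.ext hg'g) with
    map_app' := ?_ }⟩
  intro m
  show Q₂ (g m) = Q₁ m
  have h1 : (q.prod Q₂) (0, g m) = (q.prod Q₁) (0, m) := by
    rw [← hgapp m, χ.map_app]
  simpa [QuadraticMap.prod_apply] using h1

end Cancel

section Diag

variable {K L : Type} [Field K] [Field L]

lemma diagQF_apply {ι : Type} [Fintype ι] (d : ι → K) (x : ι → K) :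
    diagQF K d x = ∑ i, d i * (x i * x i) := by
  rw [diagQF, weightedSumSquares_apply]
  simp [smul_eq_mul]

lemma diagQF_polar {ι : Type} [Fintype ι] (d : ι → K) (x y : ι → K) :
    polar (diagQF K d) x y = ∑ i, 2 * d i * (x i * y i) := by
  unfold QuadraticMap.polar
  rw [diagQF_apply, diagQF_apply, diagQF_apply, ← Finset.sum_sub_distrib,
    ← Finset.sum_sub_distrib]
  apply Finset.sum_congr rfl
  intro i _
  simp only [Pi.add_apply]
  ring

lemma diag_polar_identity {ι κ : Type} [Fintype ι] [Fintype κ] {d : ι → K} {e : κ → K}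
    (f : (diagQF K d).IsometryEquiv (diagQF K e)) (x y : ι → K) :
    ∑ j, 2 * e j * (f x j * f y j) = ∑ i, 2 * d i * (x i * y i) := by
  have h : polar (diagQF K e) (f x) (f y) = polar (diagQF K d) x y := by
    unfold QuadraticMap.polar
    rw [← map_add f, f.map_app, f.map_app, f.map_app]
  rwa [diagQF_polar, diagQF_polar] at h

/-- basis vector -/
def dlt {K : Type} [Field K] {ι : Type} [DecidableEq ι] (i : ι) : ι → K :=
  fun j => if i = j then 1 else 0

lemma entries_ne_zero (h2 : (2:K) ≠ 0) {ι κ : Type} [Fintype ι] [Fintype κ]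
    {d : ι → K} {e : κ → K} (hd : ∀ i, d i ≠ 0) (h : FormIsom K d e) (t : κ) :
    e t ≠ 0 := by
  classical
  obtain ⟨f⟩ := h
  intro het
  set z : ι → K := f.toLinearEquiv.symm (dlt t) with hz
  have hfz : (f : (ι → K) → (κ → K)) z = dlt t := by
    show f.toLinearEquiv z = dlt t
    exact f.toLinearEquiv.apply_symm_apply _
  have key : ∀ y : ι → K, (0:K) = ∑ i, 2 * d i * (z i * y i) := by
    intro y
    have hpi := diag_polar_identity f z y
    rw [hfz] at hpi
    rw [← hpi]
    symm
    apply Finset.sum_eq_zero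
    intro j _
    by_cases hj : t = j
    · subst hj; rw [het]; ring
    · simp [dlt, hj]
  have hz0 : z = 0 := by
    funext i₀
    show z i₀ = 0
    have hk := key (dlt i₀)
    rw [Finset.sum_eq_single i₀] at hk
    · have hd1 : dlt (K := K) i₀ i₀ = 1 := if_pos rfl
      rw [hd1, mul_one] at hk
      rcases mul_eq_zero.mp hk.symm with h' | h'
      · exact absurd h' (mul_ne_zero h2 (hd i₀))
      · exact h'
    · intro b _ hb
      simp [dlt, Ne.symm hb]
    · intro hmem
      exact absurd (Finset.mem_univ i₀) hmem
  have hdlt : dlt (K := K) t = 0 := by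
    rw [← hfz, hz0]
    exact map_zero f.toLinearEquiv
  have := congrFun hdlt t
  simp [dlt] at this

/-- Base change of an isometry of diagonal forms along a field embedding. -/
lemma formIsom_map (φ : K →+* L) (h2L : (2:L) ≠ 0) {ι κ : Type} [Fintype ι] [Fintype κ]
    {d : ι → K} {e : κ → K} (h : FormIsom K d e) : FormIsom L (φ ∘ d) (φ ∘ e) := by
  classical
  obtain ⟨f⟩ := h
  set A : Matrix κ ι K := Matrix.of (fun j i => f (dlt i) j) with hA
  set B : Matrix ι κ K := Matrix.of (fun i j => f.toLinearEquiv.symm (dlt j) i) with hB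
  have happ : ∀ (x : ι → K) (j : κ), (f : (ι → K) → (κ → K)) x j = ∑ i, x i * A j i := by
    intro x j
    have h1 := LinearMap.pi_apply_eq_sum_univ (f.toLinearEquiv.toLinearMap) x
    have h2 := congrFun h1 j
    simp only [hA, Matrix.of_apply]
    unfold dlt
    simpa using h2
  have hsapp : ∀ (y : κ → K) (i : ι), f.toLinearEquiv.symm y i = ∑ j, y j * B i j := by
    intro y i
    have h1 := LinearMap.pi_apply_eq_sum_univ (f.toLinearEquiv.symm.toLinearMap) y
    have h2 := congrFun h1 i
    simp only [hB, Matrix.of_apply]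
    unfold dlt
    simpa using h2
  have hAB : A * B = 1 := by
    ext j j'
    rw [Matrix.mul_apply, Matrix.one_apply]
    have h1 : (f : (ι → K) → (κ → K)) (f.toLinearEquiv.symm (dlt j')) = dlt j' := by
      show f.toLinearEquiv (f.toLinearEquiv.symm (dlt j')) = dlt j'
      exact f.toLinearEquiv.apply_symm_apply _
    have h2 := congrFun h1 j
    rw [happ] at h2
    calc ∑ i, A j i * B i j'
        = ∑ i, (f.toLinearEquiv.symm (dlt j')) i * A j i := by
          apply Finset.sum_congr rfl
          intro i _
          rw [hB]
          simp only [Matrix.of_apply]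
          ring
      _ = dlt (K := K) j' j := h2
      _ = if j = j' then 1 else 0 := by simp [dlt, eq_comm]
  have hBA : B * A = 1 := by
    ext i i'
    rw [Matrix.mul_apply, Matrix.one_apply]
    have h1 : f.toLinearEquiv.symm ((f : (ι → K) → (κ → K)) (dlt i')) = dlt i' := by
      show f.toLinearEquiv.symm (f.toLinearEquiv (dlt i')) = dlt i'
      exact f.toLinearEquiv.symm_apply_apply _
    have h2 := congrFun h1 i
    rw [hsapp] at h2
    calc ∑ j, B i j * A j i'
        = ∑ j, ((f : (ι → K) → (κ → K)) (dlt i')) j * B i j := by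
          apply Finset.sum_congr rfl
          intro j _
          rw [hA]
          simp only [Matrix.of_apply]
          ring
      _ = dlt (K := K) i' i := h2
      _ = if i = i' then 1 else 0 := by simp [dlt, eq_comm]
  have CI : ∀ i i', (2:K) * (∑ j, e j * (A j i * A j i')) =
      (2:K) * (if i = i' then d i else 0) := by
    intro i i'
    have hpi := diag_polar_identity f (dlt i) (dlt i')
    have lhs : ∑ j, 2 * e j * ((f : (ι → K) → (κ → K)) (dlt i) j *
        (f : (ι → K) → (κ → K)) (dlt i') j) = 2 * ∑ j, e j * (A j i * A j i') := by
      rw [Finset.mul_sum]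
      apply Finset.sum_congr rfl
      intro j _
      rw [hA]
      simp only [Matrix.of_apply]
      ring
    have rhs : ∑ i'', 2 * d i'' * (dlt (K := K) i i'' * dlt (K := K) i' i'')
        = 2 * (if i = i' then d i else 0) := by
      by_cases hii : i = i'
      · subst hii
        rw [if_pos rfl, Finset.sum_eq_single i]
        · simp [dlt]
        · intro b _ hb
          simp [dlt, Ne.symm hb]
        · intro hmem
          exact absurd (Finset.mem_univ i) hmem
      · rw [if_neg hii, mul_zero]
        apply Finset.sum_eq_zero
        intro b _
        by_cases hib : i = b
        · subst hib
          have hib' : dlt (K := K) i' i = 0 := by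
            simp only [dlt, ite_eq_right_iff]
            intro h'
            exact absurd h'.symm hii
          rw [hib']
          ring
        · have hib' : dlt (K := K) i b = 0 := by
            simp only [dlt, ite_eq_right_iff]
            intro h'
            exact absurd h' hib
          rw [hib']
          ring
    rw [← lhs, ← rhs]
    exact hpi
  have CIL : ∀ i i', (∑ j, φ (e j) * (φ (A j i) * φ (A j i'))) =
      (if i = i' then φ (d i) else 0) := by
    intro i i'
    have hφ := congrArg φ (CI i i')
    rw [map_mul, map_mul, map_sum, apply_ite φ, map_zero] at hφ
    simp only [map_mul] at hφ
    have h2eq : φ (2:K) = (2:L) := map_ofNat φ 2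
    rw [h2eq] at hφ
    exact mul_left_cancel₀ h2L hφ
  have hAB' : (A.map φ) * (B.map φ) = 1 := by
    rw [← Matrix.map_mul, hAB, Matrix.map_one _ (map_zero φ) (map_one φ)]
  have hBA' : (B.map φ) * (A.map φ) = 1 := by
    rw [← Matrix.map_mul, hBA, Matrix.map_one _ (map_zero φ) (map_one φ)]
  set E : (ι → L) ≃ₗ[L] (κ → L) := LinearEquiv.ofLinear
    (Matrix.mulVecLin (A.map φ)) (Matrix.mulVecLin (B.map φ))
    (by rw [← Matrix.mulVecLin_mul, hAB', Matrix.mulVecLin_one])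
    (by rw [← Matrix.mulVecLin_mul, hBA', Matrix.mulVecLin_one]) with hE
  refine ⟨{ E with map_app' := ?_ }⟩
  intro x
  show diagQF L (φ ∘ e) (E x) = diagQF L (φ ∘ d) x
  have hEx : ∀ j, E x j = ∑ i, φ (A j i) * x i := by
    intro j
    have h1 : E x = (A.map φ).mulVec x := by
      rw [hE, LinearEquiv.ofLinear_apply, Matrix.mulVecLin_apply]
    rw [h1]
    simp [Matrix.mulVec, dotProduct, Matrix.map_apply]
  rw [diagQF_apply, diagQF_apply]
  calc ∑ j, (φ ∘ e) j * (E x j * E x j)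
      = ∑ j, ∑ i, ∑ i', (φ (e j) * (φ (A j i) * φ (A j i'))) * (x i * x i') := by
        apply Finset.sum_congr rfl
        intro j _
        rw [hEx j, Finset.sum_mul_sum, Finset.mul_sum]
        apply Finset.sum_congr rfl
        intro i _
        rw [Finset.mul_sum]
        apply Finset.sum_congr rfl
        intro i' _
        simp only [Function.comp_apply]
        ring
    _ = ∑ i, ∑ i', (∑ j, φ (e j) * (φ (A j i) * φ (A j i'))) * (x i * x i') := by
        rw [Finset.sum_comm]
        apply Finset.sum_congr rfl
        intro i _
        rw [Finset.sum_comm]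
        apply Finset.sum_congr rfl
        intro i' _
        rw [← Finset.sum_mul]
    _ = ∑ i, (φ ∘ d) i * (x i * x i) := by
        apply Finset.sum_congr rfl
        intro i _
        have h1 : ∑ i', (∑ j, φ (e j) * (φ (A j i) * φ (A j i'))) * (x i * x i')
            = ∑ i', (if i = i' then φ (d i) else 0) * (x i * x i') := by
          apply Finset.sum_congr rfl
          intro i' _
          rw [CIL i i']
        rw [h1]
        simp only [ite_mul, zero_mul]
        rw [Finset.sum_ite_eq]
        simp

end Diag

namespace FormIsom

variable {K : Type} [Field K] {ι κ μ κ₂ : Type} [Fintype ι] [Fintype κ] [Fintype μ]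
  [Fintype κ₂]

lemma refl (d : ι → K) : FormIsom K d d := Equivalent.refl _

lemma symm {d : ι → K} {e : κ → K} (h : FormIsom K d e) : FormIsom K e d :=
  Equivalent.symm h

lemma trans {d : ι → K} {e : κ → K} {f : μ → K} (h : FormIsom K d e)
    (h' : FormIsom K e f) : FormIsom K d f := Equivalent.trans h h'

lemma of_linear {d : ι → K} {e : κ → K} (f : (ι → K) ≃ₗ[K] (κ → K))
    (hf : ∀ x, diagQF K e (f x) = diagQF K d x) : FormIsom K d e :=
  ⟨{ f with map_app' := hf }⟩

lemma reindex (σ : ι ≃ κ) (d : κ → K) : FormIsom K (d ∘ σ) d := by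
  refine of_linear (LinearEquiv.funCongrLeft K K σ.symm) ?_
  intro x
  rw [diagQF_apply, diagQF_apply, ← Equiv.sum_comp σ]
  apply Finset.sum_congr rfl
  intro i _
  simp [LinearEquiv.funCongrLeft]

lemma sum_prod (d : ι → K) (e : κ → K) :
    QuadraticMap.Equivalent (diagQF K (Sum.elim d e))
      ((diagQF K d).prod (diagQF K e)) := by
  refine ⟨{ LinearEquiv.sumArrowLequivProdArrow ι κ K K with map_app' := ?_ }⟩
  intro x
  rw [QuadraticMap.prod_apply]
  rw [diagQF_apply, diagQF_apply, diagQF_apply]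
  rw [Fintype.sum_sum_type]
  rfl

lemma sumCongr {d₁ : ι → K} {e₁ : κ → K} {d₂ : μ → K} {e₂ : κ₂ → K}
    (h₁ : FormIsom K d₁ e₁) (h₂ : FormIsom K d₂ e₂) :
    FormIsom K (Sum.elim d₁ d₂) (Sum.elim e₁ e₂) :=
  (sum_prod d₁ d₂).trans ((Equivalent.prod h₁ h₂).trans (sum_prod e₁ e₂).symm)

lemma sumAssoc (a : ι → K) (b : κ → K) (c : μ → K) :
    FormIsom K (Sum.elim (Sum.elim a b) c) (Sum.elim a (Sum.elim b c)) := by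
  have hfe : (Sum.elim a (Sum.elim b c)) ∘ (Equiv.sumAssoc ι κ μ) =
      Sum.elim (Sum.elim a b) c := by
    funext x
    rcases x with (x | x) | x <;> simp [Equiv.sumAssoc]
  have h := reindex (Equiv.sumAssoc ι κ μ) (Sum.elim a (Sum.elim b c))
  rwa [hfe] at h

end FormIsom

section Hyp

variable {K L : Type} [Field K] [Field L]

lemma one_dim_equiv (a : K) :
    QuadraticMap.Equivalent (diagQF K (fun _ : Fin 1 => a)) (a • QuadraticMap.sq) := by
  refine ⟨{ LinearEquiv.funUnique (Fin 1) K K with map_app' := ?_ }⟩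
  intro x
  rw [diagQF_apply]
  simp [Fin.sum_univ_one, smul_eq_mul, mul_assoc, mul_comm]

lemma cancel_one (h2 : (2:K) ≠ 0) {a : K} (ha : a ≠ 0) {ι κ : Type} [Fintype ι]
    [Fintype κ] {d : ι → K} {e : κ → K}
    (h : FormIsom K (Sum.elim (fun _ : Fin 1 => a) d) (Sum.elim (fun _ : Fin 1 => a) e)) :
    FormIsom K d e := by
  have hq : (a • QuadraticMap.sq : QuadraticForm K K) 1 ≠ 0 := by
    simpa [smul_eq_mul] using ha
  apply QF.cancel_aux h2 (a • QuadraticMap.sq) hq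
  have b1 := FormIsom.sum_prod (K := K) (fun _ : Fin 1 => a) d
  have b2 := FormIsom.sum_prod (K := K) (fun _ : Fin 1 => a) e
  have p1 := Equivalent.prod (one_dim_equiv a).symm (Equivalent.refl (diagQF K d))
  have p2 := Equivalent.prod (one_dim_equiv a) (Equivalent.refl (diagQF K e))
  exact p1.trans (b1.symm.trans (Equivalent.trans h (b2.trans p2)))

lemma hyp1_split :
    FormIsom K (hypForm K 1) (Sum.elim (fun _ : Fin 1 => (1:K)) (fun _ : Fin 1 => (-1:K))) := by
  have hpf : 1 + 1 = 2 * 1 := by norm_num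
  have hfe : hypForm K 1 ∘ (finSumFinEquiv.trans (finCongr hpf)) =
      Sum.elim (fun _ : Fin 1 => (1:K)) (fun _ : Fin 1 => (-1:K)) := by
    funext x
    rcases x with x | x
    · have hv : (((finSumFinEquiv.trans (finCongr hpf)) (Sum.inl x)) :
          Fin (2*1)).val = 0 := by
        have hlt := x.isLt
        rw [Equiv.trans_apply, finCongr_apply, Fin.coe_cast, finSumFinEquiv_apply_left,
          Fin.coe_castAdd]
        omega
      simp only [Function.comp_apply, Sum.elim_inl, hypForm, hv]
      norm_num
    · have hv : (((finSumFinEquiv.trans (finCongr hpf)) (Sum.inr x)) :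
          Fin (2*1)).val = 1 := by
        have hlt := x.isLt
        rw [Equiv.trans_apply, finCongr_apply, Fin.coe_cast, finSumFinEquiv_apply_right,
          Fin.coe_natAdd]
        omega
      simp only [Function.comp_apply, Sum.elim_inr, hypForm, hv]
      norm_num
  have h := FormIsom.reindex (finSumFinEquiv.trans (finCongr hpf)) (hypForm K 1)
  rw [hfe] at h
  exact h.symm

lemma hyp_split (m : ℕ) :
    FormIsom K (Sum.elim (hypForm K 1) (hypForm K m)) (hypForm K (m+1)) := by
  have hpf : 2*1 + 2*m = 2*(m+1) := by ring
  have hfe : hypForm K (m+1) ∘ (finSumFinEquiv.trans (finCongr hpf)) =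
      Sum.elim (hypForm K 1) (hypForm K m) := by
    funext x
    rcases x with x | x
    · simp only [Function.comp_apply, Equiv.trans_apply, finSumFinEquiv_apply_left,
        finCongr_apply, Sum.elim_inl, hypForm, Fin.coe_cast, Fin.coe_castAdd]
    · simp only [Function.comp_apply, Equiv.trans_apply, finSumFinEquiv_apply_right,
        finCongr_apply, Sum.elim_inr, hypForm, Fin.coe_cast, Fin.coe_natAdd]
      have hmod : (2*1 + (x:ℕ)) % 2 = (x:ℕ) % 2 := by omega
      simp only [hmod]
  have h := FormIsom.reindex (finSumFinEquiv.trans (finCongr hpf)) (hypForm K (m+1))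
  rw [hfe] at h
  exact h

lemma hyp0_elim {ι : Type} [Fintype ι] (d : ι → K) :
    FormIsom K (Sum.elim (hypForm K 0) d) d := by
  have hpf : 2*0 = 0 := by norm_num
  have hfe : d ∘ (((finCongr hpf).sumCongr (Equiv.refl ι)).trans
      (Equiv.emptySum (Fin 0) ι)) = Sum.elim (hypForm K 0) d := by
    funext x
    rcases x with x | x
    · exact absurd x.isLt (by omega)
    · simp [Equiv.trans_apply, Equiv.sumCongr_apply, Equiv.emptySum_apply_inr]
  have h := FormIsom.reindex (((finCongr hpf).sumCongr (Equiv.refl ι)).trans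
      (Equiv.emptySum (Fin 0) ι)) d
  rw [hfe] at h
  exact h

lemma cancel_hyp1 (h2 : (2:K) ≠ 0) {ι κ : Type} [Fintype ι] [Fintype κ] {d : ι → K}
    {e : κ → K}
    (h : FormIsom K (Sum.elim (hypForm K 1) d) (Sum.elim (hypForm K 1) e)) :
    FormIsom K d e := by
  have step : ∀ {μ : Type} [Fintype μ] (c : μ → K),
      FormIsom K (Sum.elim (hypForm K 1) c)
        (Sum.elim (fun _ : Fin 1 => (1:K)) (Sum.elim (fun _ : Fin 1 => (-1:K)) c)) := by
    intro μ _ c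
    exact (FormIsom.sumCongr hyp1_split (FormIsom.refl c)).trans (FormIsom.sumAssoc _ _ _)
  have h' := ((step d).symm.trans (h.trans (step e)))
  have h1 := cancel_one h2 one_ne_zero h'
  exact cancel_one h2 (neg_ne_zero.mpr (one_ne_zero)) h1

lemma comp_hypForm (φ : K →+* L) (m : ℕ) : φ ∘ hypForm K m = hypForm L m := by
  funext j
  simp [hypForm, apply_ite φ]

end Hyp

section Witt

variable {K : Type} [Field K]

lemma wittSet_bdd {ι : Type} [Fintype ι] (d : ι → K) :
    BddAbove {m : ℕ | ∃ (s : ℕ) (e : Fin s → K), FormIsom K d (Sum.elim (hypForm K m) e)} := by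
  refine ⟨Fintype.card ι, fun m hm => ?_⟩
  obtain ⟨s, e, ⟨f⟩⟩ := hm
  have hfr := f.toLinearEquiv.finrank_eq
  rw [Module.finrank_pi, Module.finrank_pi] at hfr
  rw [Fintype.card_sum, Fintype.card_fin, Fintype.card_fin] at hfr
  omega

lemma zero_mem_wittSet {ι : Type} [Fintype ι] (d : ι → K) :
    0 ∈ {m : ℕ | ∃ (s : ℕ) (e : Fin s → K), FormIsom K d (Sum.elim (hypForm K m) e)} := by
  refine ⟨Fintype.card ι, d ∘ (Fintype.equivFin ι).symm, ?_⟩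
  have h1 := hyp0_elim (K := K) (d ∘ (Fintype.equivFin ι).symm)
  have h2 := (FormIsom.reindex (Fintype.equivFin ι).symm d).symm
  exact h2.trans h1.symm

lemma mem_wittIndex_le {ι : Type} [Fintype ι] {d : ι → K} {m : ℕ}
    (hm : ∃ (s : ℕ) (e : Fin s → K), FormIsom K d (Sum.elim (hypForm K m) e)) :
    m ≤ wittIndex K d :=
  le_csSup (wittSet_bdd d) hm

lemma wittIndex_mem {ι : Type} [Fintype ι] (d : ι → K) :
    ∃ (s : ℕ) (e : Fin s → K), FormIsom K d (Sum.elim (hypForm K (wittIndex K d)) e) :=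
  Nat.sSup_mem ⟨0, zero_mem_wittSet d⟩ (wittSet_bdd d)

lemma wittIndex_congr {ι κ : Type} [Fintype ι] [Fintype κ] {d : ι → K} {e : κ → K}
    (h : FormIsom K d e) : wittIndex K d = wittIndex K e := by
  unfold wittIndex
  congr 1
  ext m
  constructor
  · rintro ⟨s, e', he'⟩
    exact ⟨s, e', h.symm.trans he'⟩
  · rintro ⟨s, e', he'⟩
    exact ⟨s, e', h.trans he'⟩

lemma wittIndex_hyp1 (h2 : (2:K) ≠ 0) {ι : Type} [Fintype ι] (d : ι → K) :
    wittIndex K (Sum.elim (hypForm K 1) d) = wittIndex K d + 1 := by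
  apply le_antisymm
  · obtain ⟨s, e, he⟩ := wittIndex_mem (Sum.elim (hypForm K 1) d)
    rcases hw : wittIndex K (Sum.elim (hypForm K 1) d) with _ | m'
    · exact Nat.zero_le _
    · rw [hw] at he
      have hsplit : FormIsom K (Sum.elim (hypForm K (m'+1)) e)
          (Sum.elim (hypForm K 1) (Sum.elim (hypForm K m') e)) :=
        (FormIsom.sumCongr (hyp_split m').symm (FormIsom.refl e)).trans
          (FormIsom.sumAssoc _ _ _)
      have hc := cancel_hyp1 h2 (he.trans hsplit)
      have hle : m' ≤ wittIndex K d := mem_wittIndex_le ⟨s, e, hc⟩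
      omega
  · obtain ⟨s, e, he⟩ := wittIndex_mem d
    apply mem_wittIndex_le
    refine ⟨s, e, ?_⟩
    have h1 : FormIsom K (Sum.elim (hypForm K 1) d)
        (Sum.elim (hypForm K 1) (Sum.elim (hypForm K (wittIndex K d)) e)) :=
      FormIsom.sumCongr (FormIsom.refl _) he
    exact h1.trans ((FormIsom.sumAssoc _ _ _).symm.trans
      (FormIsom.sumCongr (hyp_split _) (FormIsom.refl e)))

lemma wittIndex_hyp_add (h2 : (2:K) ≠ 0) (m : ℕ) {ι : Type} [Fintype ι] (d : ι → K) :
    wittIndex K (Sum.elim (hypForm K m) d) = m + wittIndex K d := by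
  induction m with
  | zero =>
    rw [wittIndex_congr (hyp0_elim d)]
    omega
  | succ m' ih =>
    have h1 : FormIsom K (Sum.elim (hypForm K (m'+1)) d)
        (Sum.elim (hypForm K 1) (Sum.elim (hypForm K m') d)) :=
      (FormIsom.sumCongr (hyp_split m').symm (FormIsom.refl d)).trans
        (FormIsom.sumAssoc _ _ _)
    rw [wittIndex_congr h1, wittIndex_hyp1 h2, ih]
    omega

lemma wittIndex_decompose {ι : Type} [Fintype ι] {d : ι → K}
    (hpos : 1 ≤ wittIndex K d) :
    ∃ (κ : Type) (_ : Fintype κ) (e : κ → K), FormIsom K d (Sum.elim (hypForm K 1) e) := by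
  obtain ⟨s, e, he⟩ := wittIndex_mem d
  rcases hw : wittIndex K d with _ | m'
  · rw [hw] at hpos; omega
  · rw [hw] at he
    refine ⟨Fin (2*m') ⊕ Fin s, inferInstance, Sum.elim (hypForm K m') e, ?_⟩
    exact he.trans ((FormIsom.sumCongr (hyp_split m').symm (FormIsom.refl e)).trans
      (FormIsom.sumAssoc _ _ _))

end Witt

section LGP

variable {k : Type} [Field k]

lemma satisfiesLGP_of_fin (V : Set (Valuation k Zm0)) (r s : ℕ) {ι : Type} [Fintype ι]
    (d : ι → k) (hd : ∀ t, d t ≠ 0)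
    (hall : ∀ (n : ℕ) (d' : Fin n → k), (∀ t, d' t ≠ 0) → satisfiesLGP V d' r s) :
    satisfiesLGP V d r s := by
  intro hv
  set σ : Fin (Fintype.card ι) ≃ ι := (Fintype.equivFin ι).symm with hσ
  have hglob : wittIndex k (d ∘ σ) = wittIndex k d :=
    wittIndex_congr (FormIsom.reindex σ d)
  have key := hall _ (d ∘ σ) (fun t => hd (σ t)) ?_
  · rwa [hglob] at key
  · intro v hv'
    have hloc : wittIndex (valCompletion v) (toValCompletion v ∘ (d ∘ σ)) =
        wittIndex (valCompletion v) (toValCompletion v ∘ d) := by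
      have hre := FormIsom.reindex (K := valCompletion v) σ (toValCompletion v ∘ d)
      have hcomp : (toValCompletion v ∘ d) ∘ σ = toValCompletion v ∘ (d ∘ σ) := rfl
      rw [hcomp] at hre
      exact wittIndex_congr hre
    rw [hloc]
    exact hv v hv'

lemma claimA (h2 : (2:k) ≠ 0) (V : Set (Valuation k Zm0)) (r s : ℕ) (hs : 1 ≤ s)
    (h2v : ∀ v : Valuation k Zm0, (2 : valCompletion v) ≠ 0)
    (hall : ∀ (n : ℕ) (d : Fin n → k), (∀ t, d t ≠ 0) → satisfiesLGP V d r s) :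
    ∀ (m : ℕ) {ι : Type} [Fintype ι] (d : ι → k), (∀ t, d t ≠ 0) →
      satisfiesLGP V d (r + m) (s + m) := by
  intro m
  induction m with
  | zero =>
    intro ι _ d hd
    exact satisfiesLGP_of_fin V r s d hd hall
  | succ m ih =>
    intro ι _ d hd hv
    have hbase : s ≤ wittIndex k d := by
      apply satisfiesLGP_of_fin V r s d hd hall
      intro v hv'
      exact le_trans (by omega) (hv v hv')
    have hpos : 1 ≤ wittIndex k d := le_trans hs hbase
    obtain ⟨κ, _, e, he⟩ := wittIndex_decompose hpos
    have hiWd : wittIndex k d = wittIndex k e + 1 := by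
      rw [wittIndex_congr he, wittIndex_hyp1 h2]
    have he_nz : ∀ t, e t ≠ 0 := by
      intro t
      exact entries_ne_zero h2 hd he (Sum.inr t)
    have hloc : ∀ v ∈ V, r + m ≤ wittIndex (valCompletion v) (toValCompletion v ∘ e) := by
      intro v hv'
      have hmap := formIsom_map (toValCompletion v) (h2v v) he
      have hcomp : (toValCompletion v) ∘ (Sum.elim (hypForm k 1) e) =
          Sum.elim (hypForm (valCompletion v) 1) (toValCompletion v ∘ e) := by
        rw [Sum.comp_elim, comp_hypForm]
      rw [hcomp] at hmap
      have heq : wittIndex (valCompletion v) (toValCompletion v ∘ d) =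
          wittIndex (valCompletion v) (toValCompletion v ∘ e) + 1 := by
        rw [wittIndex_congr hmap, wittIndex_hyp1 (h2v v)]
      have hv2 := hv v hv'
      omega
    have hfin := ih e he_nz hloc
    omega

lemma claimB (h2 : (2:k) ≠ 0) (V : Set (Valuation k Zm0)) (r s : ℕ) (m : ℕ)
    (hmr : m < r) (hms : m < s)
    (h2v : ∀ v : Valuation k Zm0, (2 : valCompletion v) ≠ 0)
    (hall : ∀ (n : ℕ) (d : Fin n → k), (∀ t, d t ≠ 0) → satisfiesLGP V d r s) :
    ∀ {ι : Type} [Fintype ι] (d : ι → k), (∀ t, d t ≠ 0) →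
      satisfiesLGP V d (r - m) (s - m) := by
  intro ι _ d hd hv
  have hD_nz : ∀ t, Sum.elim (hypForm k m) d t ≠ 0 := by
    rintro (t | t)
    · simp only [Sum.elim_inl, hypForm]
      split_ifs
      · exact one_ne_zero
      · exact neg_ne_zero.mpr one_ne_zero
    · exact hd t
  have hDloc : ∀ v ∈ V, r ≤ wittIndex (valCompletion v)
      (toValCompletion v ∘ Sum.elim (hypForm k m) d) := by
    intro v hv'
    have hcomp : toValCompletion v ∘ Sum.elim (hypForm k m) d =
        Sum.elim (hypForm (valCompletion v) m) (toValCompletion v ∘ d) := by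
      rw [Sum.comp_elim, comp_hypForm]
    rw [hcomp, wittIndex_hyp_add (h2v v) m]
    have := hv v hv'
    omega
  have hfin := satisfiesLGP_of_fin V r s (Sum.elim (hypForm k m) d) hD_nz hall hDloc
  rw [wittIndex_hyp_add h2 m d] at hfin
  omega

end LGP


/-- **Theorem (shifting `r` and `s` together in LGP).**  Let `k` be a field of
characteristic ≠ 2 equipped with a non-empty set `V` of non-trivial discrete valuations.
If there are integers `r, s ≥ 1` such that all quadratic forms over `k` satisfy
`LGP(r, s)` with respect to `V`, then for any integer `j` (not necessarily positive)
with `r + j ≥ 1` and `s + j ≥ 1`, all quadratic forms over `k` satisfy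
`LGP(r + j, s + j)` with respect to `V`. -/
theorem statement10 (k : Type) [Field k] (hchar : ringChar k ≠ 2)
    (V : Set (Valuation k Zm0)) (hV : V.Nonempty) (hVnt : ∀ v ∈ V, isNontrivialVal v)
    (r s : ℕ) (hr : 1 ≤ r) (hs : 1 ≤ s)
    (hall : ∀ (n : ℕ) (d : Fin n → k), (∀ t, d t ≠ 0) → satisfiesLGP V d r s)
    (j : ℤ) (hj1 : 1 ≤ (r : ℤ) + j) (hj2 : 1 ≤ (s : ℤ) + j) :
    ∀ (n : ℕ) (d : Fin n → k), (∀ t, d t ≠ 0) →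
      satisfiesLGP V d ((r : ℤ) + j).toNat ((s : ℤ) + j).toNat := by
  have h2k : (2:k) ≠ 0 := Ring.two_ne_zero hchar
  have h2v : ∀ v : Valuation k Zm0, (2 : valCompletion v) ≠ 0 := by
    intro v h0
    have hinj : Function.Injective (toValCompletion v) := (toValCompletion v).injective
    have h1 : toValCompletion v (2:k) = toValCompletion v 0 := by
      rw [map_ofNat, map_zero]
      exact h0
    exact h2k (hinj h1)
  intro n d hd
  by_cases hj : 0 ≤ j
  · have e1 : ((r:ℤ)+j).toNat = r + j.toNat := by omega
    have e2 : ((s:ℤ)+j).toNat = s + j.toNat := by omega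
    rw [e1, e2]
    exact claimA h2k V r s hs h2v hall j.toNat d hd
  · have hmr : (-j).toNat < r := by omega
    have hms : (-j).toNat < s := by omega
    have e1 : ((r:ℤ)+j).toNat = r - (-j).toNat := by omega
    have e2 : ((s:ℤ)+j).toNat = s - (-j).toNat := by omega
    rw [e1, e2]
    exact claimB h2k V r s _ hmr hms h2v hall d hd
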